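/- Let d ≥ 1, α ∈ (0, d), and let 1 < q ≤ d. Let b : ℝ^d → [0,∞) be measurable and A ≥ 0 be such that ∫_{B_r(x)} b^q dy ≤ A^q r^{d - qα} for all x and r > 0. Then for every x ∈ ℝ^d and every ρ > 0, R_α(b^q)(x) ≤ N ρ^α 𝕄(b^q)(x) + N ρ^{α - qα} A^q, where N depends only on α, d, q; optimizing over ρ (taking ρ^{qα} = A^q / 𝕄(b^q)(x)) yields R_α(b^q)(x) ≤ N A (𝕄(b^q)(x))^{1 - 1/q}. -/

import Mathlib

open MeasureTheory Metric ENNReal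
open scoped FourierTransform

/-- Riesz potential of an `ℝ≥0∞`-valued function:
`R_α g (x) = ∫ g(x+y) |y|^(α-d) dy`. -/
noncomputable def riesz {d : ℕ} (α : ℝ) (g : EuclideanSpace ℝ (Fin d) → ℝ≥0∞)
    (x : EuclideanSpace ℝ (Fin d)) : ℝ≥0∞ :=
  ∫⁻ y, g (x + y) * ENNReal.ofReal (‖y‖ ^ (α - (d : ℝ)))

/-- Riesz potential of a real-valued function. -/
noncomputable def rieszR {d : ℕ} (α : ℝ) (f : EuclideanSpace ℝ (Fin d) → ℝ)
    (x : EuclideanSpace ℝ (Fin d)) : ℝ :=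
  ∫ y, f (x + y) * ‖y‖ ^ (α - (d : ℝ))

/-- Hardy–Littlewood maximal function: sup over balls containing `x`
of the average of `g` over the ball. -/
noncomputable def maxFun {d : ℕ} (g : EuclideanSpace ℝ (Fin d) → ℝ≥0∞)
    (x : EuclideanSpace ℝ (Fin d)) : ℝ≥0∞ :=
  ⨆ (z : EuclideanSpace ℝ (Fin d)) (r : ℝ) (_ : x ∈ ball z r),
    (∫⁻ y in ball z r, g y) / volume (ball z r)

section Aux
variable {d : ℕ}

private lemma aux_pow_rpow {s : ℝ} (hs : 0 ≤ s) (n : ℕ) (x : ℝ) :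
    (s ^ n) ^ x = (s ^ x) ^ n := by
  rw [← Real.rpow_natCast s n, ← Real.rpow_mul hs, mul_comm, Real.rpow_mul hs, Real.rpow_natCast]

private lemma aux_maxFun_ball (g : EuclideanSpace ℝ (Fin d) → ℝ≥0∞) (x : EuclideanSpace ℝ (Fin d))
    {R : ℝ} (hR : 0 < R) :
    ∫⁻ y in ball x R, g y ≤ maxFun g x * volume (ball x R) := by
  have h1 : (∫⁻ y in ball x R, g y) / volume (ball x R) ≤ maxFun g x :=
    le_iSup_of_le x (le_iSup_of_le R (le_iSup_of_le (mem_ball_self hR) le_rfl))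
  rwa [ENNReal.div_le_iff (measure_ball_pos volume x hR).ne' measure_ball_lt_top.ne] at h1

private lemma aux_translate (g : EuclideanSpace ℝ (Fin d) → ℝ≥0∞) (hg : Measurable g)
    (x : EuclideanSpace ℝ (Fin d)) (R : ℝ) :
    ∫⁻ y in ball (0 : EuclideanSpace ℝ (Fin d)) R, g (x + y) = ∫⁻ z in ball x R, g z := by
  have hT : MeasurePreserving (fun y : EuclideanSpace ℝ (Fin d) => x + y) volume volume :=
    measurePreserving_add_left volume x
  have hpre : (fun y : EuclideanSpace ℝ (Fin d) => x + y) ⁻¹' ball x R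
      = ball (0 : EuclideanSpace ℝ (Fin d)) R := by
    ext y
    simp [mem_ball, dist_eq_norm]
  calc ∫⁻ y in ball (0 : EuclideanSpace ℝ (Fin d)) R, g (x + y)
      = ∫⁻ y in (fun y : EuclideanSpace ℝ (Fin d) => x + y) ⁻¹' ball x R, g (x + y) := by
        rw [hpre]
    _ = ∫⁻ z in ball x R, g z := hT.setLIntegral_comp_preimage measurableSet_ball hg

private lemma aux_near_cover {ρ t : ℝ} (hρ : 0 < ρ) (ht0 : 0 < t) (htρ : t < ρ) :
    ∃ k : ℕ, ρ * (2:ℝ)⁻¹ ^ (k + 1) ≤ t ∧ t < ρ * (2:ℝ)⁻¹ ^ k := by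
  have hex : ∃ n : ℕ, ρ * (2:ℝ)⁻¹ ^ n ≤ t := by
    obtain ⟨n, hn⟩ := exists_pow_lt_of_lt_one (div_pos ht0 hρ) (by norm_num : (2:ℝ)⁻¹ < 1)
    rw [lt_div_iff₀ hρ] at hn
    exact ⟨n, by nlinarith⟩
  classical
  have hn0 : Nat.find hex ≠ 0 := by
    intro h
    have h2 := Nat.find_spec hex
    rw [h] at h2
    simp at h2
    linarith
  obtain ⟨k, hk⟩ := Nat.exists_eq_succ_of_ne_zero hn0
  refine ⟨k, ?_, ?_⟩
  · have h2 := Nat.find_spec hex; rwa [hk] at h2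
  · have h2 := Nat.find_min hex (hk ▸ k.lt_succ_self)
    push_neg at h2
    exact h2

private lemma aux_far_cover {ρ t : ℝ} (hρ : 0 < ρ) (hρt : ρ ≤ t) :
    ∃ k : ℕ, ρ * 2 ^ k ≤ t ∧ t < ρ * 2 ^ (k + 1) := by
  have hex : ∃ n : ℕ, t < ρ * 2 ^ n := by
    obtain ⟨n, hn⟩ := pow_unbounded_of_one_lt (t / ρ) (one_lt_two (α := ℝ))
    rw [div_lt_iff₀ hρ] at hn
    exact ⟨n, by nlinarith⟩
  classical
  have hn0 : Nat.find hex ≠ 0 := by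
    intro h
    have h2 := Nat.find_spec hex
    rw [h] at h2
    simp at h2
    linarith
  obtain ⟨k, hk⟩ := Nat.exists_eq_succ_of_ne_zero hn0
  refine ⟨k, ?_, ?_⟩
  · have h2 := Nat.find_min hex (hk ▸ k.lt_succ_self)
    push_neg at h2
    exact h2
  · have h2 := Nat.find_spec hex; rwa [hk] at h2

end Aux

set_option maxHeartbeats 2000000 in
/-- **Proof of Lemma 4, both steps.** Under the Morrey condition with exponent `q`,
for all `x` and `ρ > 0`:
`R_α(b^q)(x) ≤ N ρ^α 𝕄(b^q)(x) + N ρ^(α - qα) A^q`, and optimizing over `ρ`,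
`R_α(b^q)(x) ≤ N A (𝕄(b^q)(x))^(1 - 1/q)`, with `N = N(α,d,q)`. -/
theorem riesz_split_and_optimize
    (d : ℕ) (hd : 1 ≤ d) (α q : ℝ) (hα0 : 0 < α) (hαd : α < d)
    (hq : 1 < q) (hqd : q ≤ d) :
    ∃ N : ℝ, 0 < N ∧
      ∀ b : EuclideanSpace ℝ (Fin d) → ℝ, Measurable b → (∀ x, 0 ≤ b x) →
      ∀ A : ℝ, 0 ≤ A →
      (∀ (x : EuclideanSpace ℝ (Fin d)) (r : ℝ), 0 < r →
        ∫⁻ y in ball x r, ENNReal.ofReal (b y ^ q) ≤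
          ENNReal.ofReal (A ^ q * r ^ ((d : ℝ) - q * α))) →
      (∀ (x : EuclideanSpace ℝ (Fin d)) (ρ : ℝ), 0 < ρ →
        riesz α (fun y => ENNReal.ofReal (b y ^ q)) x ≤
          ENNReal.ofReal (N * ρ ^ α) *
              maxFun (fun y => ENNReal.ofReal (b y ^ q)) x +
            ENNReal.ofReal (N * ρ ^ (α - q * α) * A ^ q)) ∧
      ∀ x : EuclideanSpace ℝ (Fin d),
        riesz α (fun y => ENNReal.ofReal (b y ^ q)) x ≤
          ENNReal.ofReal (N * A) *
            (maxFun (fun y => ENNReal.ofReal (b y ^ q)) x) ^ (1 - 1 / q) := by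
  classical
  haveI : Nonempty (Fin d) := ⟨⟨0, hd⟩⟩
  haveI : Nontrivial (EuclideanSpace ℝ (Fin d)) := inferInstance
  have hαd' : α - (d : ℝ) < 0 := by
    have : (1:ℝ) ≤ d := by exact_mod_cast hd
    linarith
  set s : ℝ := (2:ℝ)⁻¹ with hs_def
  have hs0 : (0:ℝ) < s := by norm_num [hs_def]
  have hs1 : s < 1 := by norm_num [hs_def]
  set κ : ℝ := (volume (ball (0 : EuclideanSpace ℝ (Fin d)) 1)).toReal with hκdef
  have hκpos : 0 < κ :=
    ENNReal.toReal_pos (measure_ball_pos volume _ one_pos).ne' measure_ball_lt_top.ne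
  have hκ : volume (ball (0 : EuclideanSpace ℝ (Fin d)) 1) = ENNReal.ofReal κ :=
    (ENNReal.ofReal_toReal measure_ball_lt_top.ne).symm
  have hw1 : s ^ α < 1 := Real.rpow_lt_one hs0.le hs1 hα0
  have hw1' : (0:ℝ) < s ^ α := Real.rpow_pos_of_pos hs0 α
  have hneg : α - q * α < 0 := by nlinarith
  have hw2 : (2:ℝ) ^ (α - q * α) < 1 := Real.rpow_lt_one_of_one_lt_of_neg one_lt_two hneg
  have hw2' : (0:ℝ) < (2:ℝ) ^ (α - q * α) := Real.rpow_pos_of_pos two_pos _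
  set C1 : ℝ := κ * s ^ (α - (d:ℝ)) * (1 - s ^ α)⁻¹ with hC1def
  have hC1pos : 0 < C1 := by
    apply mul_pos (mul_pos hκpos (Real.rpow_pos_of_pos hs0 _))
    exact inv_pos.2 (by linarith)
  set C2 : ℝ := (2:ℝ) ^ ((d:ℝ) - q * α) * (1 - (2:ℝ) ^ (α - q * α))⁻¹ with hC2def
  have hC2pos : 0 < C2 := by
    apply mul_pos (Real.rpow_pos_of_pos two_pos _)
    exact inv_pos.2 (by linarith)
  set N0 : ℝ := max C1 C2 with hN0def
  have hN0 : 0 < N0 := lt_max_iff.2 (Or.inl hC1pos)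
  refine ⟨2 * N0, by linarith, ?_⟩
  intro b hb hb0 A hA hMorrey
  set g : EuclideanSpace ℝ (Fin d) → ℝ≥0∞ := fun y => ENNReal.ofReal (b y ^ q) with hgdef
  have hgm : Measurable g :=
    ((Real.continuous_rpow_const (by linarith : (0:ℝ) ≤ q)).measurable.comp hb).ennreal_ofReal
  -- KEY estimate
  have key : ∀ (x : EuclideanSpace ℝ (Fin d)) (ρ : ℝ), 0 < ρ →
      riesz α g x ≤ maxFun g x * ENNReal.ofReal (C1 * ρ ^ α)
        + ENNReal.ofReal (C2 * ρ ^ (α - q * α) * A ^ q) := by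
    intro x ρ hρ
    set w : EuclideanSpace ℝ (Fin d) → ℝ≥0∞ :=
      fun y => ENNReal.ofReal (‖y‖ ^ (α - (d:ℝ))) with hwdef
    set Ak : ℕ → Set (EuclideanSpace ℝ (Fin d)) := fun k =>
      ball 0 (ρ * s ^ k) \ ball 0 (ρ * s ^ (k+1)) with hAdef
    set Bk : ℕ → Set (EuclideanSpace ℝ (Fin d)) := fun k =>
      ball 0 (ρ * 2 ^ (k+1)) \ ball 0 (ρ * 2 ^ k) with hBdef
    have hcover : (Set.univ : Set (EuclideanSpace ℝ (Fin d))) ⊆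
        ({0} ∪ ⋃ k, Ak k) ∪ ⋃ k, Bk k := by
      intro y _
      rcases eq_or_ne y 0 with rfl | hy
      · exact Or.inl (Or.inl rfl)
      by_cases hyρ : ‖y‖ < ρ
      · obtain ⟨k, h1, h2⟩ := aux_near_cover hρ (norm_pos_iff.2 hy) hyρ
        refine Or.inl (Or.inr (Set.mem_iUnion.2 ⟨k, mem_ball_zero_iff.2 h2, fun hmem => ?_⟩))
        exact absurd (mem_ball_zero_iff.1 hmem) (not_lt.2 h1)
      · push_neg at hyρ
        obtain ⟨k, h1, h2⟩ := aux_far_cover hρ hyρ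
        exact Or.inr (Set.mem_iUnion.2 ⟨k, mem_ball_zero_iff.2 h2,
          fun hmem => absurd (mem_ball_zero_iff.1 hmem) (not_lt.2 h1)⟩)
    have hnear : ∀ k : ℕ, (∫⁻ y in Ak k, g (x + y) * w y)
        ≤ maxFun g x * (ENNReal.ofReal (κ * s ^ (α - (d:ℝ)) * ρ ^ α)
            * ENNReal.ofReal (s ^ α) ^ k) := by
      intro k
      have hrk : (0:ℝ) < ρ * s ^ k := by positivity
      have hrk1 : (0:ℝ) < ρ * s ^ (k+1) := by positivity
      have hb1 : (∫⁻ y in Ak k, g (x + y) * w y)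
          ≤ ∫⁻ y in Ak k, g (x + y) * ENNReal.ofReal ((ρ * s ^ (k+1)) ^ (α - (d:ℝ))) := by
        apply setLIntegral_mono ((hgm.comp (measurable_id.const_add x)).mul_const _)
        intro y hy
        apply mul_le_mul_right
        apply ENNReal.ofReal_le_ofReal
        apply Real.rpow_le_rpow_of_nonpos hrk1 _ hαd'.le
        have h2 := hy.2
        simpa [hAdef, mem_ball_zero_iff, not_lt] using h2
      have hb2 : (∫⁻ y in Ak k, g (x + y) * ENNReal.ofReal ((ρ * s ^ (k+1)) ^ (α - (d:ℝ))))
          = (∫⁻ y in Ak k, g (x + y)) * ENNReal.ofReal ((ρ * s ^ (k+1)) ^ (α - (d:ℝ))) :=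
        lintegral_mul_const' _ _ ENNReal.ofReal_ne_top
      have hb3 : (∫⁻ y in Ak k, g (x + y)) ≤ ∫⁻ z in ball x (ρ * s ^ k), g z :=
        le_trans (lintegral_mono_set Set.diff_subset) (le_of_eq (aux_translate g hgm x _))
      have hb4 : (∫⁻ z in ball x (ρ * s ^ k), g z)
          ≤ maxFun g x * volume (ball x (ρ * s ^ k)) := aux_maxFun_ball g x hrk
      have hvol : volume (ball x (ρ * s ^ k)) = ENNReal.ofReal ((ρ * s ^ k) ^ d * κ) := by
        rw [Measure.addHaar_ball_of_pos volume x hrk, hκ,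
          ← ENNReal.ofReal_mul (by positivity)]
        congr 2
        simp [finrank_euclideanSpace_fin]
      have hreal : ((ρ * s ^ k) ^ d * κ) * (ρ * s ^ (k+1)) ^ (α - (d:ℝ))
          = (κ * s ^ (α - (d:ℝ)) * ρ ^ α) * (s ^ α) ^ k := by
        have h1 : (ρ * s ^ (k+1)) ^ (α - (d:ℝ))
            = ρ ^ (α - (d:ℝ)) * ((s ^ (α - (d:ℝ))) ^ k * s ^ (α - (d:ℝ))) := by
          rw [Real.mul_rpow hρ.le (pow_nonneg hs0.le _), aux_pow_rpow hs0.le, pow_succ]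
        have h2 : ((ρ * s ^ k) ^ d : ℝ) = ρ ^ ((d:ℝ)) * (s ^ ((d:ℝ))) ^ k := by
          rw [mul_pow, pow_right_comm, ← Real.rpow_natCast ρ d, ← Real.rpow_natCast s d]
        have h3 : ρ ^ ((d:ℝ)) * ρ ^ (α - (d:ℝ)) = ρ ^ α := by
          rw [← Real.rpow_add hρ]; congr 1; ring
        have h4 : (s ^ ((d:ℝ))) ^ k * (s ^ (α - (d:ℝ))) ^ k = (s ^ α) ^ k := by
          rw [← mul_pow, ← Real.rpow_add hs0]; congr 2; ring
        rw [h1, h2, ← h3, ← h4]; ring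
      calc (∫⁻ y in Ak k, g (x + y) * w y)
          ≤ (∫⁻ y in Ak k, g (x + y)) * ENNReal.ofReal ((ρ * s ^ (k+1)) ^ (α - (d:ℝ))) :=
            hb1.trans (le_of_eq hb2)
        _ ≤ (maxFun g x * ENNReal.ofReal ((ρ * s ^ k) ^ d * κ))
              * ENNReal.ofReal ((ρ * s ^ (k+1)) ^ (α - (d:ℝ))) := by
            apply mul_le_mul_left
            refine (hb3.trans hb4).trans (le_of_eq ?_)
            rw [hvol]
        _ = maxFun g x * (ENNReal.ofReal (κ * s ^ (α - (d:ℝ)) * ρ ^ α)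
              * ENNReal.ofReal (s ^ α) ^ k) := by
            rw [mul_assoc]
            congr 1
            rw [← ENNReal.ofReal_pow hw1'.le, ← ENNReal.ofReal_mul (by positivity),
              ← ENNReal.ofReal_mul (by positivity)]
            exact congrArg ENNReal.ofReal hreal
    have hfar : ∀ k : ℕ, (∫⁻ y in Bk k, g (x + y) * w y)
        ≤ ENNReal.ofReal ((2:ℝ) ^ ((d:ℝ) - q * α) * ρ ^ (α - q * α) * A ^ q)
            * ENNReal.ofReal ((2:ℝ) ^ (α - q * α)) ^ k := by
      intro k
      have hrk : (0:ℝ) < ρ * 2 ^ k := by positivity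
      have hrk1 : (0:ℝ) < ρ * 2 ^ (k+1) := by positivity
      have hb1 : (∫⁻ y in Bk k, g (x + y) * w y)
          ≤ ∫⁻ y in Bk k, g (x + y) * ENNReal.ofReal ((ρ * 2 ^ k) ^ (α - (d:ℝ))) := by
        apply setLIntegral_mono ((hgm.comp (measurable_id.const_add x)).mul_const _)
        intro y hy
        apply mul_le_mul_right
        apply ENNReal.ofReal_le_ofReal
        apply Real.rpow_le_rpow_of_nonpos hrk _ hαd'.le
        have h2 := hy.2
        simpa [hBdef, mem_ball_zero_iff, not_lt] using h2
      have hb2 : (∫⁻ y in Bk k, g (x + y) * ENNReal.ofReal ((ρ * 2 ^ k) ^ (α - (d:ℝ))))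
          = (∫⁻ y in Bk k, g (x + y)) * ENNReal.ofReal ((ρ * 2 ^ k) ^ (α - (d:ℝ))) :=
        lintegral_mul_const' _ _ ENNReal.ofReal_ne_top
      have hb3 : (∫⁻ y in Bk k, g (x + y)) ≤ ∫⁻ z in ball x (ρ * 2 ^ (k+1)), g z :=
        le_trans (lintegral_mono_set Set.diff_subset) (le_of_eq (aux_translate g hgm x _))
      have hb4 : (∫⁻ z in ball x (ρ * 2 ^ (k+1)), g z)
          ≤ ENNReal.ofReal (A ^ q * (ρ * 2 ^ (k+1)) ^ ((d:ℝ) - q * α)) := hMorrey x _ hrk1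
      have hreal : (A ^ q * (ρ * 2 ^ (k+1)) ^ ((d:ℝ) - q * α)) * (ρ * 2 ^ k) ^ (α - (d:ℝ))
          = ((2:ℝ) ^ ((d:ℝ) - q * α) * ρ ^ (α - q * α) * A ^ q)
              * ((2:ℝ) ^ (α - q * α)) ^ k := by
        have h1 : (ρ * 2 ^ (k+1) : ℝ) ^ ((d:ℝ) - q * α)
            = ρ ^ ((d:ℝ) - q * α) * (((2:ℝ) ^ ((d:ℝ) - q * α)) ^ k * (2:ℝ) ^ ((d:ℝ) - q * α)) := by
          rw [Real.mul_rpow hρ.le (pow_nonneg (by norm_num) _),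
            aux_pow_rpow (by norm_num : (0:ℝ) ≤ 2), pow_succ]
        have h2 : (ρ * 2 ^ k : ℝ) ^ (α - (d:ℝ))
            = ρ ^ (α - (d:ℝ)) * ((2:ℝ) ^ (α - (d:ℝ))) ^ k := by
          rw [Real.mul_rpow hρ.le (pow_nonneg (by norm_num) _),
            aux_pow_rpow (by norm_num : (0:ℝ) ≤ 2)]
        have h3 : ρ ^ ((d:ℝ) - q * α) * ρ ^ (α - (d:ℝ)) = ρ ^ (α - q * α) := by
          rw [← Real.rpow_add hρ]; congr 1; ring
        have h4 : (((2:ℝ) ^ ((d:ℝ) - q * α)) ^ k) * (((2:ℝ) ^ (α - (d:ℝ))) ^ k)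
            = (((2:ℝ) ^ (α - q * α)) ^ k) := by
          rw [← mul_pow, ← Real.rpow_add two_pos]; congr 2; ring
        rw [h1, h2, ← h3, ← h4]; ring
      calc (∫⁻ y in Bk k, g (x + y) * w y)
          ≤ (∫⁻ y in Bk k, g (x + y)) * ENNReal.ofReal ((ρ * 2 ^ k) ^ (α - (d:ℝ))) :=
            hb1.trans (le_of_eq hb2)
        _ ≤ ENNReal.ofReal (A ^ q * (ρ * 2 ^ (k+1)) ^ ((d:ℝ) - q * α))
              * ENNReal.ofReal ((ρ * 2 ^ k) ^ (α - (d:ℝ))) :=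
            mul_le_mul_left (hb3.trans hb4) _
        _ = ENNReal.ofReal ((2:ℝ) ^ ((d:ℝ) - q * α) * ρ ^ (α - q * α) * A ^ q)
              * ENNReal.ofReal ((2:ℝ) ^ (α - q * α)) ^ k := by
            rw [← ENNReal.ofReal_pow hw2'.le, ← ENNReal.ofReal_mul (by positivity),
              ← ENNReal.ofReal_mul (by positivity)]
            exact congrArg ENNReal.ofReal hreal
    have hsplit : riesz α g x ≤ (∑' k, ∫⁻ y in Ak k, g (x + y) * w y)
        + ∑' k, ∫⁻ y in Bk k, g (x + y) * w y := by
      calc riesz α g x = ∫⁻ y in Set.univ, g (x + y) * w y :=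
            (setLIntegral_univ _).symm
        _ ≤ ∫⁻ y in ({0} ∪ ⋃ k, Ak k) ∪ ⋃ k, Bk k, g (x + y) * w y :=
            lintegral_mono_set hcover
        _ ≤ (∫⁻ y in {0} ∪ ⋃ k, Ak k, g (x + y) * w y)
              + ∫⁻ y in ⋃ k, Bk k, g (x + y) * w y := lintegral_union_le _ _ _
        _ ≤ ((∫⁻ y in ({0} : Set (EuclideanSpace ℝ (Fin d))), g (x + y) * w y)
              + ∫⁻ y in ⋃ k, Ak k, g (x + y) * w y)
              + ∫⁻ y in ⋃ k, Bk k, g (x + y) * w y :=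
            add_le_add_left (lintegral_union_le _ _ _) _
        _ ≤ ((0 : ℝ≥0∞) + ∑' k, ∫⁻ y in Ak k, g (x + y) * w y)
              + ∑' k, ∫⁻ y in Bk k, g (x + y) * w y := by
            refine add_le_add (add_le_add (le_of_eq ?_) (lintegral_iUnion_le _ _))
              (lintegral_iUnion_le _ _)
            exact setLIntegral_measure_zero _ _ (measure_singleton 0)
        _ = _ := by rw [zero_add]
    refine hsplit.trans (add_le_add ?_ ?_)
    · calc (∑' k, ∫⁻ y in Ak k, g (x + y) * w y)
          ≤ ∑' k, maxFun g x * (ENNReal.ofReal (κ * s ^ (α - (d:ℝ)) * ρ ^ α)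
              * ENNReal.ofReal (s ^ α) ^ k) := ENNReal.tsum_le_tsum hnear
        _ = maxFun g x * (ENNReal.ofReal (κ * s ^ (α - (d:ℝ)) * ρ ^ α)
              * ∑' k : ℕ, ENNReal.ofReal (s ^ α) ^ k) := by
            rw [ENNReal.tsum_mul_left, ENNReal.tsum_mul_left]
        _ = maxFun g x * (ENNReal.ofReal (κ * s ^ (α - (d:ℝ)) * ρ ^ α)
              * (1 - ENNReal.ofReal (s ^ α))⁻¹) := by
            rw [ENNReal.tsum_geometric]
        _ = maxFun g x * ENNReal.ofReal (C1 * ρ ^ α) := by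
            congr 1
            rw [← ENNReal.ofReal_one, ← ENNReal.ofReal_sub _ hw1'.le,
              ← ENNReal.ofReal_inv_of_pos (by linarith), ← ENNReal.ofReal_mul (by positivity)]
            congr 1
            rw [hC1def]; ring
    · calc (∑' k, ∫⁻ y in Bk k, g (x + y) * w y)
          ≤ ∑' k : ℕ, ENNReal.ofReal ((2:ℝ) ^ ((d:ℝ) - q * α) * ρ ^ (α - q * α) * A ^ q)
              * ENNReal.ofReal ((2:ℝ) ^ (α - q * α)) ^ k := ENNReal.tsum_le_tsum hfar
        _ = ENNReal.ofReal ((2:ℝ) ^ ((d:ℝ) - q * α) * ρ ^ (α - q * α) * A ^ q)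
              * (1 - ENNReal.ofReal ((2:ℝ) ^ (α - q * α)))⁻¹ := by
            rw [ENNReal.tsum_mul_left, ENNReal.tsum_geometric]
        _ = ENNReal.ofReal (C2 * ρ ^ (α - q * α) * A ^ q) := by
            rw [← ENNReal.ofReal_one, ← ENNReal.ofReal_sub _ hw2'.le,
              ← ENNReal.ofReal_inv_of_pos (by linarith), ← ENNReal.ofReal_mul (by positivity)]
            congr 1
            rw [hC2def]; ring
  constructor
  · intro x ρ hρ
    refine (key x ρ hρ).trans (add_le_add ?_ ?_)
    · rw [mul_comm]
      apply mul_le_mul_left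
      apply ENNReal.ofReal_le_ofReal
      apply mul_le_mul_of_nonneg_right _ (Real.rpow_pos_of_pos hρ α).le
      have := le_max_left C1 C2
      linarith
    · apply ENNReal.ofReal_le_ofReal
      apply mul_le_mul_of_nonneg_right _ (Real.rpow_nonneg hA q)
      apply mul_le_mul_of_nonneg_right _ (Real.rpow_pos_of_pos hρ _).le
      have := le_max_right C1 C2
      linarith
  · intro x
    by_cases hz : ∀ r : ℝ, 0 < r → (∫⁻ y in ball x r, g y) = 0
    · -- degenerate: g vanishes a.e., so the Riesz potential is 0
      have huniv : ∫⁻ y, g y = 0 := by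
        have hsub : (Set.univ : Set (EuclideanSpace ℝ (Fin d))) ⊆
            ⋃ n : ℕ, ball x ((n:ℝ) + 1) := by
          intro z _
          obtain ⟨n, hn⟩ := exists_nat_gt (dist z x)
          exact Set.mem_iUnion.2 ⟨n, by simp [mem_ball]; linarith⟩
        refine le_antisymm ?_ zero_le
        have hval : ∀ n : ℕ, ∫⁻ y in ball x ((n:ℝ) + 1), g y = 0 :=
          fun n => hz _ (by positivity)
        calc ∫⁻ y, g y = ∫⁻ y in Set.univ, g y := (setLIntegral_univ g).symm
          _ ≤ ∫⁻ y in ⋃ n : ℕ, ball x ((n:ℝ) + 1), g y := lintegral_mono_set hsub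
          _ ≤ ∑' n : ℕ, ∫⁻ y in ball x ((n:ℝ) + 1), g y := lintegral_iUnion_le _ _
          _ = 0 := by simp [hval]
      have hg0 : g =ᵐ[volume] 0 := (lintegral_eq_zero_iff hgm).1 huniv
      have hcomp : (fun y => g (x + y)) =ᵐ[(volume : Measure (EuclideanSpace ℝ (Fin d)))]
          (fun _ => 0) := by
        have h2 := (measurePreserving_add_left
          (volume : Measure (EuclideanSpace ℝ (Fin d))) x).quasiMeasurePreserving.ae_eq_comp hg0
        exact h2
      have hr0 : riesz α g x = 0 := by
        have heq : (fun y => g (x + y) * ENNReal.ofReal (‖y‖ ^ (α - (d:ℝ))))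
            =ᵐ[(volume : Measure (EuclideanSpace ℝ (Fin d)))] (fun _ => 0) := by
          filter_upwards [hcomp] with y hy
          simp [hy]
        rw [riesz, lintegral_congr_ae heq, lintegral_zero]
      rw [hr0]
      exact zero_le
    · push_neg at hz
      obtain ⟨r, hr, hne⟩ := hz
      set M := maxFun g x with hM
      have hMpos : M ≠ 0 := by
        intro h
        apply hne
        have h2 := aux_maxFun_ball g x hr
        rw [← hM, h, zero_mul] at h2
        exact le_antisymm h2 zero_le
      have hApos : 0 < A := by
        rcases hA.lt_or_eq with h | h
        · exact h
        exfalso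
        apply hne
        have h2 := hMorrey x r hr
        rw [← h, Real.zero_rpow (by linarith : q ≠ 0), zero_mul, ENNReal.ofReal_zero] at h2
        exact le_antisymm h2 zero_le
      rcases eq_or_ne M ⊤ with hMt | hMt
      · rw [hMt, ENNReal.top_rpow_of_pos (by
          have : 1 / q < 1 := by
            rw [div_lt_one (by linarith)]; linarith
          linarith), ENNReal.mul_top]
        · exact le_top
        · exact (ENNReal.ofReal_pos.2 (by positivity)).ne'
      · -- 0 < M < ∞ : optimize over ρ
        set m := M.toReal with hmdef
        have hmpos : 0 < m := ENNReal.toReal_pos hMpos hMt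
        have hMm : M = ENNReal.ofReal m := (ENNReal.ofReal_toReal hMt).symm
        have hqne : q ≠ 0 := by positivity
        have hαne : α ≠ 0 := hα0.ne'
        set ρ : ℝ := (A ^ q / m) ^ (1 / (q * α)) with hρdef
        have hbase : 0 < A ^ q / m := div_pos (Real.rpow_pos_of_pos hApos q) hmpos
        have hρpos : 0 < ρ := Real.rpow_pos_of_pos hbase _
        have hAq : (A ^ q) ^ (1/q) = A := by
          rw [← Real.rpow_mul hA, mul_one_div_cancel hqne, Real.rpow_one]
        have hρα : ρ ^ α = A / m ^ (1/q) := by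
          rw [hρdef, ← Real.rpow_mul hbase.le,
            show 1 / (q * α) * α = 1/q by field_simp,
            Real.div_rpow (Real.rpow_nonneg hA q) hmpos.le, hAq]
        have hi : ρ ^ α * m = A * m ^ (1 - 1/q) := by
          rw [hρα, Real.rpow_sub hmpos, Real.rpow_one]
          have hmq : m ^ (1/q) ≠ 0 := (Real.rpow_pos_of_pos hmpos _).ne'
          field_simp
        have hρ2 : ρ ^ (α - q * α) = (A ^ q / m) ^ (1/q - 1) := by
          rw [hρdef, ← Real.rpow_mul hbase.le]
          congr 1
          field_simp
        have hii : ρ ^ (α - q * α) * A ^ q = A * m ^ (1 - 1/q) := by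
          rw [hρ2, Real.div_rpow (Real.rpow_nonneg hA q) hmpos.le]
          have e1 : (A ^ q) ^ (1/q - 1) = A ^ (1 - q) := by
            rw [← Real.rpow_mul hA]
            congr 1
            field_simp
          have e2 : A ^ (1 - q) * A ^ q = A := by
            rw [← Real.rpow_add hApos, show (1 - q) + q = (1:ℝ) by ring, Real.rpow_one]
          have e3 : m ^ (1 - 1/q) = (m ^ (1/q - 1))⁻¹ := by
            rw [← Real.rpow_neg hmpos.le]
            congr 1
            ring
          rw [e1, e3, div_eq_mul_inv,
            show A ^ (1-q) * (m ^ (1/q - 1))⁻¹ * A ^ q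
              = (A ^ (1-q) * A ^ q) * (m ^ (1/q-1))⁻¹ by ring, e2]
        have hXpos : 0 ≤ A * m ^ (1 - 1/q) := by positivity
        refine (key x ρ hρpos).trans ?_
        have t1 : M * ENNReal.ofReal (C1 * ρ ^ α)
            = ENNReal.ofReal (C1 * (A * m ^ (1 - 1/q))) := by
          rw [hMm, ← ENNReal.ofReal_mul hmpos.le]
          congr 1
          rw [← hi]
          ring
        have t2 : ENNReal.ofReal (C2 * ρ ^ (α - q * α) * A ^ q)
            = ENNReal.ofReal (C2 * (A * m ^ (1 - 1/q))) := by
          congr 1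
          rw [← hii]
          ring
        rw [t1, t2, ← ENNReal.ofReal_add (by positivity) (by positivity)]
        have t3 : C1 * (A * m ^ (1 - 1/q)) + C2 * (A * m ^ (1 - 1/q))
            ≤ (2 * N0 * A) * m ^ (1 - 1/q) := by
          have h1 := le_max_left C1 C2
          have h2 := le_max_right C1 C2
          nlinarith [hXpos, Real.rpow_nonneg hmpos.le (1 - 1/q)]
        refine (ENNReal.ofReal_le_ofReal t3).trans ?_
        rw [ENNReal.ofReal_mul (by positivity), hMm, ENNReal.ofReal_rpow_of_pos hmpos]
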